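/- Let X₁,…,X_{n+1} be real numbers, (ψ_k)_{k∈K} a finite orthonormal family of bounded functions in L²(ℝ) with sup_{y∈ℝ} Σ_{k∈K} ψ_k(y)² ≤ B, and S_m the linear span of functions (x,y) ↦ φ_j(x)ψ_k(y) for a finite family (φ_j)_{j∈J} of bounded functions in L²(ℝ). Let π : ℝ² → [0,∞) be measurable with ∫_ℝ π(x,y) dy = 1 for every x, let A ⊆ ℝ² be measurable with sup_{(x,y)∈A} π(x,y) ≤ c < ∞, and assume y ↦ π(x,y)1_A(x,y) ∈ L²(ℝ) for each x. Let H = (L²(ℝ))ⁿ with inner product ⟨u,v⟩ = Σ_{i=1}^n ∫_ℝ u_i v_i and W = {(s(X_i,·))_{1≤i≤n} : s ∈ S_m}. If π̂ ∈ S_m is such that (π̂(X_i,·))_{1≤i≤n} is the orthogonal projection onto W of the n-tuple (y ↦ Σ_{k∈K} ψ_k(X_{i+1})ψ_k(y))_{1≤i≤n}, then (1/n) Σ_{i=1}^n ∫_ℝ ( π(X_i,y)1_A(X_i,y) − π̂(X_i,y) )² dy ≤ c + 4B. -/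

import Mathlib

open MeasureTheory

/-- Product of two `L²` functions is integrable. -/
lemma memL2_mul_integrable {f g : ℝ → ℝ}
    (hf : MemLp f 2 (volume : Measure ℝ)) (hg : MemLp g 2 (volume : Measure ℝ)) :
    Integrable (fun y => f y * g y) (volume : Measure ℝ) := by
  have h1 : Integrable (fun y => (f y + g y) ^ 2) (volume : Measure ℝ) := by
    simpa [Pi.add_apply] using (hf.add hg).integrable_sq
  have h2 := hf.integrable_sq
  have h3 := hg.integrable_sq
  have heq : (fun y => f y * g y)
      = fun y => (((f y + g y) ^ 2 - f y ^ 2) - g y ^ 2) * (1 / 2) := by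
    funext y; ring
  rw [heq]
  exact ((h1.sub h2).sub h3).mul_const _

/-- inequality (10) of the paper.  If `π̂ ∈ S_m` is the least-squares
estimator, i.e. `(π̂(Xᵢ,·))ᵢ` is the orthogonal projection (in `H = (L²(ℝ))ⁿ`) onto
`W = {(s(Xᵢ,·))ᵢ : s ∈ S_m}` of the tuple `(y ↦ Σₖ ψₖ(X_{i+1})ψₖ(y))ᵢ` — expressed by
its defining property that the difference is orthogonal to every element of `W` — then
`(1/n) Σᵢ ∫ (π1_A(Xᵢ,y) − π̂(Xᵢ,y))² dy ≤ c + 4B`. -/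
theorem empirical_risk_deterministic_bound
    {J K : Type*} [Fintype J] [Fintype K] [DecidableEq K]
    (n : ℕ) (hn : 0 < n) (X : ℕ → ℝ)
    (φ : J → ℝ → ℝ) (ψ : K → ℝ → ℝ)
    (hφ_meas : ∀ j, Measurable (φ j)) (hψ_meas : ∀ k, Measurable (ψ k))
    (hφ_L2 : ∀ j, MemLp (φ j) 2 (volume : Measure ℝ))
    (hψ_L2 : ∀ k, MemLp (ψ k) 2 (volume : Measure ℝ))
    (hφ_bdd : ∀ j, ∃ C, ∀ x, |φ j x| ≤ C)
    (hψ_on : ∀ k k' : K, (∫ y, ψ k y * ψ k' y) = if k = k' then 1 else 0)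
    (B : ℝ) (hB : 0 < B) (hψ_bd : ∀ y, ∑ k, ψ k y ^ 2 ≤ B)
    (π : ℝ × ℝ → ℝ) (hπ_meas : Measurable π) (hπ_nonneg : ∀ p, 0 ≤ π p)
    (hπ_marg : ∀ x, ∫ y, π (x, y) = 1)
    (A : Set (ℝ × ℝ)) (hA : MeasurableSet A)
    (c : ℝ) (hc : 0 ≤ c) (hπA : ∀ p ∈ A, π p ≤ c)
    (hπL2 : ∀ x, MemLp (fun y => A.indicator π (x, y)) 2 (volume : Measure ℝ))
    (πhat : ℝ × ℝ → ℝ)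
    (hπhat_mem : ∃ Amat : J → K → ℝ,
      πhat = fun p => ∑ j, ∑ k, Amat j k * φ j p.1 * ψ k p.2)
    (hproj : ∀ Bmat : J → K → ℝ,
      ∑ i ∈ Finset.range n, ∫ y,
        ((∑ k, ψ k (X (i + 1)) * ψ k y) - πhat (X i, y))
          * (∑ j, ∑ k, Bmat j k * φ j (X i) * ψ k y) = 0) :
    (1 / (n : ℝ)) * ∑ i ∈ Finset.range n,
        ∫ y, (A.indicator π (X i, y) - πhat (X i, y)) ^ 2 ≤ c + 4 * B := by
  classical
  obtain ⟨Amat, hAmat⟩ := hπhat_mem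
  -- coefficients of π̂(Xᵢ,·) in the ψ-basis
  set b : ℕ → K → ℝ := fun i k => ∑ j, Amat j k * φ j (X i) with hb
  have hrw : ∀ i y, (∑ j, ∑ k, Amat j k * φ j (X i) * ψ k y) = ∑ k, b i k * ψ k y := by
    intro i y
    rw [Finset.sum_comm]
    exact Finset.sum_congr rfl fun k _ => by rw [hb]; simp only; rw [Finset.sum_mul]
  have hπhat_eq : ∀ i y, πhat (X i, y) = ∑ k, b i k * ψ k y := by
    intro i y; rw [hAmat]; exact hrw i y
  -- products ψ k * ψ k' are integrable
  have hψψ_int : ∀ k k' : K, Integrable (fun y => ψ k y * ψ k' y) volume :=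
    fun k k' => memL2_mul_integrable (hψ_L2 k) (hψ_L2 k')
  -- linear combinations of the ψ's are in L²
  have hcombo : ∀ bv : K → ℝ, MemLp (fun y => ∑ k, bv k * ψ k y) 2 (volume : Measure ℝ) := by
    intro bv
    have := memLp_finset_sum (μ := (volume : Measure ℝ)) (p := 2) Finset.univ
      (f := fun (k : K) (y : ℝ) => bv k * ψ k y) (fun k _ => (hψ_L2 k).const_mul (bv k))
    simpa using this
  -- bilinear expansion via orthonormality
  have hbil : ∀ bv cv : K → ℝ,
      (∫ y, (∑ k, bv k * ψ k y) * (∑ k, cv k * ψ k y)) = ∑ k, bv k * cv k := by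
    intro bv cv
    have hpt : ∀ y, (∑ k, bv k * ψ k y) * (∑ k, cv k * ψ k y)
        = ∑ k : K, ∑ k' : K, bv k * cv k' * (ψ k y * ψ k' y) := by
      intro y
      rw [Finset.sum_mul_sum]
      exact Finset.sum_congr rfl fun k _ => Finset.sum_congr rfl fun k' _ => by ring
    simp_rw [hpt]
    rw [integral_finset_sum _
      (fun k _ => integrable_finset_sum _ (fun k' _ => (hψψ_int k k').const_mul _))]
    have hterm : ∀ k : K, (∫ y, ∑ k', bv k * cv k' * (ψ k y * ψ k' y))
        = ∑ k', bv k * cv k' * (if k = k' then 1 else 0) := by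
      intro k
      rw [integral_finset_sum _ (fun k' _ => (hψψ_int k k').const_mul _)]
      exact Finset.sum_congr rfl fun k' _ => by rw [integral_const_mul, hψ_on]
    simp_rw [hterm, mul_ite, mul_one, mul_zero]
    exact Finset.sum_congr rfl fun k _ => by
      rw [Finset.sum_ite_eq, if_pos (Finset.mem_univ k)]
  -- the "empirical L² norm" of the estimator row i
  set Q : ℕ → ℝ := fun i => ∑ k, b i k * b i k with hQ
  have hQ_nonneg : ∀ i, 0 ≤ Q i :=
    fun i => Finset.sum_nonneg fun k _ => mul_self_nonneg _
  -- projection identity ⇒ ∑ᵢ Qᵢ controlled by the target norms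
  have hp := hproj Amat
  have hkey : ∀ i, (∫ y, ((∑ k, ψ k (X (i + 1)) * ψ k y) - πhat (X i, y))
      * (∑ j, ∑ k, Amat j k * φ j (X i) * ψ k y))
      = (∑ k, ψ k (X (i + 1)) * b i k) - Q i := by
    intro i
    have h1 : (fun y => ((∑ k, ψ k (X (i + 1)) * ψ k y) - πhat (X i, y))
        * (∑ j, ∑ k, Amat j k * φ j (X i) * ψ k y))
        = fun y => (∑ k, ψ k (X (i + 1)) * ψ k y) * (∑ k, b i k * ψ k y)
            - (∑ k, b i k * ψ k y) * (∑ k, b i k * ψ k y) := by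
      funext y; rw [hπhat_eq i y, hrw i y]; ring
    rw [h1, integral_sub (memL2_mul_integrable (hcombo _) (hcombo _))
      (memL2_mul_integrable (hcombo _) (hcombo _)),
      hbil (fun k => ψ k (X (i + 1))) (b i), hbil (b i) (b i)]
  rw [Finset.sum_congr rfl (fun i _ => hkey i), Finset.sum_sub_distrib, sub_eq_zero] at hp
  -- ∑ᵢ Qᵢ ≤ n B
  have hQle : ∑ i ∈ Finset.range n, Q i ≤ (n : ℝ) * B := by
    have hR : ∑ i ∈ Finset.range n, ∑ k, ψ k (X (i + 1)) ^ 2 ≤ (n : ℝ) * B := by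
      calc ∑ i ∈ Finset.range n, ∑ k, ψ k (X (i + 1)) ^ 2
          ≤ ∑ _i ∈ Finset.range n, B := Finset.sum_le_sum fun i _ => hψ_bd _
        _ = (n : ℝ) * B := by simp [Finset.sum_const, nsmul_eq_mul]
    have hAM : (∑ i ∈ Finset.range n, ∑ k, ψ k (X (i + 1)) * b i k)
        ≤ (∑ i ∈ Finset.range n, ∑ k, ψ k (X (i + 1)) ^ 2
            + ∑ i ∈ Finset.range n, Q i) / 2 := by
      have h1 : ∀ i ∈ Finset.range n, (∑ k, ψ k (X (i + 1)) * b i k)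
          ≤ (∑ k, ψ k (X (i + 1)) ^ 2 + Q i) / 2 := by
        intro i _
        have hterm : ∀ k : K, ψ k (X (i + 1)) * b i k
            ≤ (ψ k (X (i + 1)) ^ 2 + b i k * b i k) / 2 := by
          intro k; nlinarith [sq_nonneg (ψ k (X (i + 1)) - b i k)]
        calc (∑ k, ψ k (X (i + 1)) * b i k)
            ≤ ∑ k, (ψ k (X (i + 1)) ^ 2 + b i k * b i k) / 2 :=
              Finset.sum_le_sum fun k _ => hterm k
          _ = (∑ k, ψ k (X (i + 1)) ^ 2 + Q i) / 2 := by
              rw [← Finset.sum_div, Finset.sum_add_distrib]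
      calc (∑ i ∈ Finset.range n, ∑ k, ψ k (X (i + 1)) * b i k)
          ≤ ∑ i ∈ Finset.range n, (∑ k, ψ k (X (i + 1)) ^ 2 + Q i) / 2 :=
            Finset.sum_le_sum h1
        _ = (∑ i ∈ Finset.range n, ∑ k, ψ k (X (i + 1)) ^ 2
              + ∑ i ∈ Finset.range n, Q i) / 2 := by
            rw [← Finset.sum_div, Finset.sum_add_distrib]
    linarith [hp, hAM, hR]
  -- per-row bound: ∫ (π1_A − π̂)² ≤ c + B + 2 Q i
  have hrow : ∀ i, (∫ y, (A.indicator π (X i, y) - πhat (X i, y)) ^ 2)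
      ≤ c + B + 2 * Q i := by
    intro i
    set u : ℝ → ℝ := fun y => A.indicator π (X i, y) with hu
    set v : ℝ → ℝ := fun y => ∑ k, b i k * ψ k y with hv
    have hu2 : MemLp u 2 (volume : Measure ℝ) := hπL2 (X i)
    have hv2 : MemLp v 2 (volume : Measure ℝ) := hcombo (b i)
    have hu_meas : Measurable u :=
      (hπ_meas.indicator hA).comp (measurable_prodMk_left)
    have hu_nonneg : ∀ y, 0 ≤ u y := by
      intro y
      exact Set.indicator_nonneg (fun p _ => hπ_nonneg p) _
    have hu_le : ∀ y, u y ≤ π (X i, y) := by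
      intro y
      exact Set.indicator_le_self' (fun p _ => hπ_nonneg p) _
    have hu_le_c : ∀ y, u y ≤ c := by
      intro y
      rw [hu]; simp only [Set.indicator_apply]
      split_ifs with h
      · exact hπA _ h
      · exact hc
    have hπi_int : Integrable (fun y => π (X i, y)) volume := by
      by_contra h
      have h1 := hπ_marg (X i)
      rw [integral_undef h] at h1
      norm_num at h1
    have hu_int : Integrable u volume := by
      refine hπi_int.mono' hu_meas.aestronglyMeasurable (ae_of_all _ fun y => ?_)
      rw [Real.norm_eq_abs, abs_of_nonneg (hu_nonneg y)]
      exact hu_le y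
    have hu_int_le : (∫ y, u y) ≤ 1 := by
      rw [← hπ_marg (X i)]
      exact integral_mono hu_int hπi_int hu_le
    have hu_int_nonneg : 0 ≤ ∫ y, u y :=
      integral_nonneg hu_nonneg
    -- ∫ u² ≤ c
    have hu_sq : (∫ y, u y ^ 2) ≤ c := by
      have h1 : (∫ y, u y ^ 2) ≤ ∫ y, c * u y := by
        refine integral_mono hu2.integrable_sq (hu_int.const_mul c) fun y => ?_
        have := hu_nonneg y
        nlinarith [hu_le_c y]
      calc (∫ y, u y ^ 2) ≤ ∫ y, c * u y := h1
        _ = c * ∫ y, u y := integral_const_mul c u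
        _ ≤ c * 1 := mul_le_mul_of_nonneg_left hu_int_le hc
        _ = c := mul_one c
    -- |∫ u v| ≤ (Q i + B)/2
    have hvy : ∀ y, |v y| ≤ (Q i + B) / 2 := by
      intro y
      have h1 : |v y| ≤ ∑ k, |b i k * ψ k y| := Finset.abs_sum_le_sum_abs _ _
      have h2 : ∀ k : K, |b i k * ψ k y| ≤ (b i k * b i k + ψ k y ^ 2) / 2 := by
        intro k
        rw [abs_mul]
        nlinarith [sq_nonneg (|b i k| - |ψ k y|), sq_abs (b i k), sq_abs (ψ k y),
          abs_nonneg (b i k), abs_nonneg (ψ k y)]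
      calc |v y| ≤ ∑ k, (b i k * b i k + ψ k y ^ 2) / 2 :=
            h1.trans (Finset.sum_le_sum fun k _ => h2 k)
        _ = (Q i + ∑ k, ψ k y ^ 2) / 2 := by
            rw [← Finset.sum_div, Finset.sum_add_distrib]
        _ ≤ (Q i + B) / 2 := by linarith [hψ_bd y]
    have hM_nonneg : 0 ≤ (Q i + B) / 2 := by
      have := hQ_nonneg i; linarith
    have huv_int : Integrable (fun y => u y * v y) volume :=
      memL2_mul_integrable hu2 hv2
    have huv_abs : |∫ y, u y * v y| ≤ (Q i + B) / 2 := by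
      have h1 : |∫ y, u y * v y| ≤ ∫ y, |u y * v y| := by
        rw [← Real.norm_eq_abs]
        refine (norm_integral_le_integral_norm _).trans_eq ?_
        simp [Real.norm_eq_abs, abs_mul]
      have h2 : (∫ y, |u y * v y|) ≤ ∫ y, ((Q i + B) / 2) * u y := by
        refine integral_mono huv_int.abs (hu_int.const_mul _) fun y => ?_
        rw [abs_mul, abs_of_nonneg (hu_nonneg y)]
        calc u y * |v y| ≤ u y * ((Q i + B) / 2) :=
              mul_le_mul_of_nonneg_left (hvy y) (hu_nonneg y)
          _ = ((Q i + B) / 2) * u y := mul_comm _ _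
      have h3 : (∫ y, ((Q i + B) / 2) * u y) ≤ (Q i + B) / 2 := by
        rw [integral_const_mul]
        calc ((Q i + B) / 2) * ∫ y, u y ≤ ((Q i + B) / 2) * 1 :=
              mul_le_mul_of_nonneg_left hu_int_le hM_nonneg
          _ = (Q i + B) / 2 := mul_one _
      linarith
    have hvv : (∫ y, v y * v y) = Q i := hbil (b i) (b i)
    have hexp : (∫ y, (u y - v y) ^ 2)
        = (∫ y, u y ^ 2) - 2 * (∫ y, u y * v y) + Q i := by
      have hfe : (fun y => (u y - v y) ^ 2)
          = fun y => (u y ^ 2 - 2 * (u y * v y)) + v y * v y := by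
        funext y; ring
      have hI1 : Integrable (fun y => u y ^ 2 - 2 * (u y * v y)) volume := by
        exact (hu2.integrable_sq).sub (huv_int.const_mul 2)
      rw [hfe, integral_add hI1 (memL2_mul_integrable hv2 hv2),
        integral_sub hu2.integrable_sq (huv_int.const_mul 2),
        integral_const_mul, hvv]
    have hEq : (∫ y, (A.indicator π (X i, y) - πhat (X i, y)) ^ 2)
        = ∫ y, (u y - v y) ^ 2 := by
      congr 1
      funext y
      simp only [hu, hv, hπhat_eq i]
    rw [hEq, hexp]
    have habs := abs_le.mp huv_abs
    linarith [hu_sq]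
  -- assemble
  have hS : (∑ i ∈ Finset.range n,
      ∫ y, (A.indicator π (X i, y) - πhat (X i, y)) ^ 2)
      ≤ (n : ℝ) * (c + B) + 2 * ((n : ℝ) * B) := by
    calc (∑ i ∈ Finset.range n,
        ∫ y, (A.indicator π (X i, y) - πhat (X i, y)) ^ 2)
        ≤ ∑ i ∈ Finset.range n, (c + B + 2 * Q i) :=
          Finset.sum_le_sum fun i _ => hrow i
      _ = (n : ℝ) * (c + B) + 2 * ∑ i ∈ Finset.range n, Q i := by
          rw [Finset.sum_add_distrib, Finset.sum_const, Finset.card_range,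
            nsmul_eq_mul, ← Finset.mul_sum]
      _ ≤ (n : ℝ) * (c + B) + 2 * ((n : ℝ) * B) := by linarith [hQle]
  have hnpos : (0 : ℝ) < (n : ℝ) := by exact_mod_cast hn
  have hfin : (1 / (n : ℝ)) * ((n : ℝ) * (c + B) + 2 * ((n : ℝ) * B))
      = c + 3 * B := by
    field_simp
    ring
  calc (1 / (n : ℝ)) * ∑ i ∈ Finset.range n,
        ∫ y, (A.indicator π (X i, y) - πhat (X i, y)) ^ 2
      ≤ (1 / (n : ℝ)) * ((n : ℝ) * (c + B) + 2 * ((n : ℝ) * B)) :=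
        mul_le_mul_of_nonneg_left hS (by positivity)
    _ = c + 3 * B := hfin
    _ ≤ c + 4 * B := by linarith
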